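/- Let F have unit-norm columns and F̃ satisfy F̃F̃* = (N/M)I with singular values relation as in the SVD argument: if λ_1,...,λ_M are the eigenvalues of FF*, then ‖F̃ − F‖_HS² ≥ ∑_{m=1}^M (√λ_m − √(N/M))². -/

import Mathlib

noncomputable section

def hsq {M N : ℕ} (A : Matrix (Fin M) (Fin N) ℂ) : ℝ := ∑ i, ∑ j, ‖A i j‖ ^ 2

lemma conj_mul_re (z : ℂ) : (star z * z).re = ‖z‖ ^ 2 := by
  rw [Complex.star_def, mul_comm, Complex.mul_conj, Complex.ofReal_re, ← Complex.sq_norm]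

lemma hsq_eq_diagSum {M N : ℕ} (Y : Matrix (Fin M) (Fin N) ℂ) :
    hsq Y = ∑ n, ((Y.conjTranspose * Y) n n).re := by
  unfold hsq
  rw [Finset.sum_comm]
  refine Finset.sum_congr rfl fun n _ => ?_
  rw [Matrix.mul_apply, Complex.re_sum]
  refine Finset.sum_congr rfl fun m _ => ?_
  rw [Matrix.conjTranspose_apply, conj_mul_re]

lemma rowSum_eq_diag {M N : ℕ} (Y : Matrix (Fin M) (Fin N) ℂ) (m : Fin M) :
    ∑ n, ‖Y m n‖ ^ 2 = ((Y * Y.conjTranspose) m m).re := by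
  rw [Matrix.mul_apply, Complex.re_sum]
  refine Finset.sum_congr rfl fun n _ => ?_
  rw [Matrix.conjTranspose_apply, mul_comm, conj_mul_re]

theorem dist_to_tight_frame_eigenvalue_bound
    (M N : ℕ) (hM : 0 < M) (hN : 0 < N)
    (F Ft : Matrix (Fin M) (Fin N) ℂ)
    (hunit : ∀ n : Fin N, ∑ m : Fin M, ‖F m n‖ ^ 2 = 1)
    (htight : Ft * Ft.conjTranspose = ((N : ℂ) / M) • (1 : Matrix (Fin M) (Fin M) ℂ)) :
    ∑ m : Fin M,
        (Real.sqrt ((Matrix.isHermitian_mul_conjTranspose_self F).eigenvalues m)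
          - Real.sqrt ((N : ℝ) / M)) ^ 2
      ≤ hsq (Ft - F) := by
  set hG := Matrix.isHermitian_mul_conjTranspose_self F with hGdef
  set lam := hG.eigenvalues with hlam
  set V : Matrix (Fin M) (Fin M) ℂ := (hG.eigenvectorUnitary : Matrix (Fin M) (Fin M) ℂ) with hV
  have hVmem := hG.eigenvectorUnitary.2
  have hVV : V * V.conjTranspose = 1 := by
    rw [← Matrix.star_eq_conjTranspose]
    exact (Matrix.mem_unitaryGroup_iff).mp hVmem
  have hVV' : V.conjTranspose * V = 1 := by
    rw [← Matrix.star_eq_conjTranspose]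
    exact (Matrix.mem_unitaryGroup_iff').mp hVmem
  have hdiag : V.conjTranspose * (F * F.conjTranspose) * V
      = Matrix.diagonal (RCLike.ofReal ∘ lam) := by
    rw [← Matrix.star_eq_conjTranspose]
    have h := hG.conjStarAlgAut_star_eigenvectorUnitary
    rw [Unitary.conjStarAlgAut_star_apply] at h
    exact h
  set A := V.conjTranspose * Ft with hA
  set B := V.conjTranspose * F with hB
  set c : ℝ := (N : ℝ) / M with hc
  have hc0 : 0 ≤ c := by positivity
  -- B * Bᴴ = diagonal lam
  have hBB : B * B.conjTranspose = Matrix.diagonal (RCLike.ofReal ∘ lam) := by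
    rw [hB, Matrix.conjTranspose_mul, Matrix.conjTranspose_conjTranspose, ← hdiag]
    simp only [Matrix.mul_assoc]
  have hAA : A * A.conjTranspose = (c : ℂ) • (1 : Matrix (Fin M) (Fin M) ℂ) := by
    rw [hA, Matrix.conjTranspose_mul, Matrix.conjTranspose_conjTranspose]
    have : V.conjTranspose * Ft * (Ft.conjTranspose * V)
        = V.conjTranspose * (Ft * Ft.conjTranspose) * V := by
      simp only [Matrix.mul_assoc]
    rw [this, htight, Matrix.mul_smul, Matrix.mul_one, Matrix.smul_mul, hVV']
    congr 1
    push_cast [hc]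
    ring
  have hrowB : ∀ m, ∑ n, ‖B m n‖ ^ 2 = lam m := by
    intro m
    rw [rowSum_eq_diag, hBB]
    simp [Matrix.diagonal_apply_eq]
  have hrowA : ∀ m, ∑ n, ‖A m n‖ ^ 2 = c := by
    intro m
    rw [rowSum_eq_diag, hAA]
    simp
  -- hsq invariance
  have hsq_eq : hsq (Ft - F) = hsq (A - B) := by
    have hAB : A - B = V.conjTranspose * (Ft - F) := by rw [hA, hB, Matrix.mul_sub]
    rw [hAB, hsq_eq_diagSum (Ft - F), hsq_eq_diagSum]
    have heq : (V.conjTranspose * (Ft - F)).conjTranspose * (V.conjTranspose * (Ft - F))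
        = (Ft - F).conjTranspose * (Ft - F) := by
      rw [Matrix.conjTranspose_mul, Matrix.conjTranspose_conjTranspose]
      calc (Ft - F).conjTranspose * V * (V.conjTranspose * (Ft - F))
          = (Ft - F).conjTranspose * ((V * V.conjTranspose) * (Ft - F)) := by
            simp only [Matrix.mul_assoc]
        _ = (Ft - F).conjTranspose * (Ft - F) := by rw [hVV, Matrix.one_mul]
    rw [heq]
  rw [hsq_eq]
  have hsqAB : hsq (A - B) = ∑ m, ∑ n, ‖A m n - B m n‖ ^ 2 := by
    unfold hsq; simp [Matrix.sub_apply]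
  rw [hsqAB]
  refine Finset.sum_le_sum fun m _ => ?_
  -- row-wise reverse triangle inequality
  set a : EuclideanSpace ℂ (Fin N) := WithLp.toLp 2 (fun n => A m n) with ha
  set b : EuclideanSpace ℂ (Fin N) := WithLp.toLp 2 (fun n => B m n) with hb'
  have hna : ‖a‖ = Real.sqrt c := by
    rw [EuclideanSpace.norm_eq]
    congr 1
    exact hrowA m
  have hnb : ‖b‖ = Real.sqrt (lam m) := by
    rw [EuclideanSpace.norm_eq]
    congr 1
    exact hrowB m
  have key : (‖b‖ - ‖a‖) ^ 2 ≤ ‖b - a‖ ^ 2 := by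
    rw [← sq_abs (‖b‖ - ‖a‖)]
    exact pow_le_pow_left₀ (abs_nonneg _) (abs_norm_sub_norm_le b a) 2
  have hba : ‖b - a‖ ^ 2 = ∑ n, ‖A m n - B m n‖ ^ 2 := by
    rw [EuclideanSpace.norm_eq, Real.sq_sqrt (by positivity)]
    refine Finset.sum_congr rfl fun n _ => ?_
    have : (b - a) n = B m n - A m n := rfl
    rw [this, norm_sub_rev]
  rw [hna, hnb] at key
  rw [← hba]
  exact key
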